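/- Let m ≥ 3 be odd and let L : ℝ → (−1/2, 1/2) be defined by L(α) = lim_{n→∞} h^{(n)}(α γ^{−n}) as above. Then L is 1-Lipschitz: |L(α) − L(α')| ≤ |α − α'| for all α, α' ∈ ℝ. -/

import Mathlib

open Finset Filter

/-- The majority polynomial: probability that `Bin(m,x) ≥ (m+1)/2`. -/
noncomputable def majPoly (m : ℕ) (x : ℝ) : ℝ :=
  ∑ k ∈ Finset.Icc ((m + 1) / 2) m, (m.choose k : ℝ) * x ^ k * (1 - x) ^ (m - k)

/-- `h(x) = g(1/2 + x) − 1/2`, the recentered majority polynomial. -/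
noncomputable def majH (m : ℕ) (x : ℝ) : ℝ := majPoly m (1/2 + x) - 1/2

/-- `γ(m) = m · C(m−1,(m−1)/2) · 2^{−(m−1)}`. -/
noncomputable def gammaMaj (m : ℕ) : ℝ :=
  (m : ℝ) * ((m - 1).choose ((m - 1) / 2) : ℝ) / 2 ^ (m - 1)

lemma majPoly_hasDerivAt (p : ℕ) (x : ℝ) :
    HasDerivAt (majPoly (2*p+1))
      (((2*p+1 : ℕ) : ℝ) * ((2*p).choose p : ℝ) * (x*(1-x))^p) x := by
  have hm : (2*p+1 : ℕ) = 2*p+1 := rfl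
  generalize hmm : 2*p+1 = m at *
  have hterm : ∀ k ∈ Finset.Icc ((m+1)/2) m,
      HasDerivAt (fun y : ℝ => (m.choose k : ℝ) * y ^ k * (1 - y) ^ (m - k))
        ((m.choose k : ℝ) * ((k : ℝ) * x ^ (k-1) * (1-x) ^ (m-k)
          - ((m - k : ℕ) : ℝ) * x ^ k * (1-x) ^ (m-k-1))) x := by
    intro k _
    have h1 : HasDerivAt (fun y : ℝ => y ^ k) ((k:ℝ) * x ^ (k-1)) x := hasDerivAt_pow k x
    have h2 : HasDerivAt (fun y : ℝ => (1 - y) ^ (m-k))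
        (-(((m-k : ℕ):ℝ) * (1-x) ^ (m-k-1))) x := by
      have := ((hasDerivAt_pow (m-k) (1-x)).comp x
        ((hasDerivAt_const x (1:ℝ)).sub (hasDerivAt_id x)))
      simpa [Function.comp_def] using this
    have h3 := (h1.mul h2).const_mul ((m.choose k : ℝ))
    have hfun : (fun y : ℝ => (m.choose k : ℝ) * y ^ k * (1 - y) ^ (m-k))
        = fun y : ℝ => (m.choose k : ℝ) * (y ^ k * (1 - y) ^ (m-k)) := by
      funext y; ring
    rw [hfun]
    refine h3.congr_deriv ?_
    ring
  have hsum := HasDerivAt.fun_sum hterm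
  have key : ∑ k ∈ Finset.Icc ((m+1)/2) m,
      (m.choose k : ℝ) * ((k : ℝ) * x ^ (k-1) * (1-x) ^ (m-k)
        - ((m - k : ℕ) : ℝ) * x ^ k * (1-x) ^ (m-k-1))
      = ((m : ℕ) : ℝ) * ((2*p).choose p : ℝ) * (x*(1-x))^p := by
    set a : ℕ → ℝ := fun j => (((m-1).choose j : ℕ) : ℝ) * x ^ j * (1-x) ^ (m-1-j) with ha
    have hstep : ∀ k ∈ Finset.Icc ((m+1)/2) m,
        (m.choose k : ℝ) * ((k : ℝ) * x ^ (k-1) * (1-x) ^ (m-k)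
          - ((m - k : ℕ) : ℝ) * x ^ k * (1-x) ^ (m-k-1))
        = ((m:ℕ):ℝ) * (a (k-1) - a k) := by
      intro k hk
      simp only [Finset.mem_Icc] at hk
      have hk1 : 1 ≤ k := by omega
      have c1 : m * (m-1).choose (k-1) = m.choose k * k := by
        have h := Nat.add_one_mul_choose_eq (m-1) (k-1)
        have e1 : m - 1 + 1 = m := by omega
        have e2 : k - 1 + 1 = k := by omega
        simpa [Nat.succ_eq_add_one, e1, e2] using h
      have c2 : (m-1).choose k * m = m.choose k * (m - k) := by
        have h := Nat.choose_mul_succ_eq (m-1) k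
        have e1 : m - 1 + 1 = m := by omega
        simpa [e1] using h
      have c1' : ((m:ℕ):ℝ) * ((m-1).choose (k-1) : ℝ) = (m.choose k : ℝ) * (k:ℝ) := by
        exact_mod_cast congrArg (Nat.cast : ℕ → ℝ) c1
      have c2' : ((m-1).choose k : ℝ) * ((m:ℕ):ℝ) = (m.choose k : ℝ) * ((m - k : ℕ):ℝ) := by
        exact_mod_cast congrArg (Nat.cast : ℕ → ℝ) c2
      have e3 : m - 1 - (k-1) = m - k := by omega
      have e4 : m - k - 1 = m - 1 - k := by omega
      simp only [ha]
      rw [e3, e4]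
      linear_combination (x^(k-1) * (1-x)^(m-k)) * c1'.symm
        + (x^k * (1-x)^(m-1-k)) * c2'
    rw [Finset.sum_congr rfl hstep, ← Finset.mul_sum]
    have ht : (m+1)/2 = p + 1 := by omega
    have htel : ∑ k ∈ Finset.Icc ((m+1)/2) m, (a (k-1) - a k) = a p - a m := by
      rw [ht, ← Finset.Ico_add_one_right_eq_Icc, Finset.sum_Ico_eq_sum_range]
      have hix : ∀ i, a (p + 1 + i - 1) - a (p + 1 + i) = a (p + i) - a (p + (i+1)) := by
        intro i; congr 2 <;> omega
      rw [Finset.sum_congr rfl fun i _ => hix i,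
        Finset.sum_range_sub' (fun i => a (p + i))]
      congr 2
      omega
    have ham : a m = 0 := by
      have : (m-1).choose m = 0 := Nat.choose_eq_zero_of_lt (by omega)
      simp [ha, this]
    have hap : a p = ((2*p).choose p : ℝ) * (x*(1-x))^p := by
      show (((m-1).choose p : ℕ) : ℝ) * x ^ p * (1-x) ^ (m-1-p)
          = ((2*p).choose p : ℝ) * (x*(1-x))^p
      have e6 : m - 1 - p = p := by omega
      have e5 : m - 1 = 2*p := by omega
      rw [e6, e5, mul_pow]
      ring
    rw [htel, ham, hap]
    ring
  rw [key] at hsum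
  exact hsum

lemma gammaMaj_eq (p : ℕ) :
    gammaMaj (2*p+1) = ((2*p+1 : ℕ) : ℝ) * ((2*p).choose p : ℝ) / 4 ^ p := by
  have e1 : 2*p+1-1 = 2*p := by omega
  have e2 : (2*p)/2 = p := by omega
  rw [gammaMaj, e1, e2]
  norm_num [pow_mul]

lemma gammaMaj_nonneg (m : ℕ) : 0 ≤ gammaMaj m := by
  unfold gammaMaj; positivity

lemma one_lt_gammaMaj (p : ℕ) (hp : 1 ≤ p) : 1 < gammaMaj (2*p+1) := by
  have hnat : 4 ^ p < (2*p+1) * (2*p).choose p := by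
    have h1 : (4:ℕ)^p = 2^(2*p) := by rw [pow_mul]; norm_num
    have h2 : (2:ℕ)^(2*p) = ∑ i ∈ range (2*p+1), (2*p).choose i :=
      (Nat.sum_range_choose (2*p)).symm
    have h3 : ∑ i ∈ range (2*p+1), (2*p).choose i
        < ∑ _i ∈ range (2*p+1), (2*p).choose p := by
      apply Finset.sum_lt_sum
      · intro i _
        have h := Nat.choose_le_middle i (2*p)
        have e : (2*p)/2 = p := by omega
        rwa [e] at h
      · refine ⟨0, Finset.mem_range.2 (by omega), ?_⟩
        have h4 : (2*p).choose 1 = 2*p := Nat.choose_one_right (2*p)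
        have h5 : (2*p).choose 1 ≤ (2*p).choose p := by
          have h := Nat.choose_le_middle 1 (2*p)
          have e : (2*p)/2 = p := by omega
          rwa [e] at h
        simp only [Nat.choose_zero_right]
        omega
    have h4 : ∑ _i ∈ range (2*p+1), (2*p).choose p = (2*p+1) * (2*p).choose p := by
      rw [Finset.sum_const, Finset.card_range, smul_eq_mul]
    omega
  rw [gammaMaj_eq, lt_div_iff₀ (by positivity), one_mul]
  calc (4:ℝ)^p = ((4^p : ℕ) : ℝ) := by push_cast; ring
    _ < (((2*p+1) * (2*p).choose p : ℕ) : ℝ) := by exact_mod_cast hnat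
    _ = ((2*p+1 : ℕ) : ℝ) * ((2*p).choose p : ℝ) := by push_cast; ring

lemma majPoly_mem (m : ℕ) {y : ℝ} (hy : y ∈ Set.Icc (0:ℝ) 1) :
    majPoly m y ∈ Set.Icc (0:ℝ) 1 := by
  obtain ⟨hy0, hy1⟩ := hy
  have h1y : (0:ℝ) ≤ 1 - y := by linarith
  constructor
  · apply Finset.sum_nonneg
    intro k _
    positivity
  · have hsub : Finset.Icc ((m+1)/2) m ⊆ Finset.range (m+1) := by
      intro k hk
      simp only [Finset.mem_Icc] at hk
      exact Finset.mem_range.2 (by omega)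
    have hle : majPoly m y ≤ ∑ k ∈ Finset.range (m+1),
        (m.choose k : ℝ) * y^k * (1-y)^(m-k) := by
      apply Finset.sum_le_sum_of_subset_of_nonneg hsub
      intro k _ _
      positivity
    have htot : ∑ k ∈ Finset.range (m+1), (m.choose k : ℝ) * y^k * (1-y)^(m-k) = 1 := by
      have h := add_pow y (1-y) m
      have h2 : y + (1-y) = 1 := by ring
      rw [h2, one_pow] at h
      rw [Finset.sum_congr rfl (fun k _ => by ring :
        ∀ k ∈ Finset.range (m+1), (m.choose k : ℝ) * y^k * (1-y)^(m-k)
          = y^k * (1-y)^(m-k) * (m.choose k : ℝ))]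
      exact h.symm
    exact hle.trans (le_of_eq htot)

lemma majPoly_lip (p : ℕ) {u v : ℝ} (hu : u ∈ Set.Icc (0:ℝ) 1) (hv : v ∈ Set.Icc (0:ℝ) 1) :
    |majPoly (2*p+1) u - majPoly (2*p+1) v| ≤ gammaMaj (2*p+1) * |u - v| := by
  have hderiv := majPoly_hasDerivAt p
  have hdiff : ∀ x ∈ Set.Icc (0:ℝ) 1, DifferentiableAt ℝ (majPoly (2*p+1)) x :=
    fun x _ => (hderiv x).differentiableAt
  have hbound : ∀ x ∈ Set.Icc (0:ℝ) 1, ‖deriv (majPoly (2*p+1)) x‖ ≤ gammaMaj (2*p+1) := by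
    intro x hx
    rw [(hderiv x).deriv, Real.norm_eq_abs]
    have h1 : 0 ≤ x*(1-x) := mul_nonneg hx.1 (by linarith [hx.2])
    have h2 : x*(1-x) ≤ 1/4 := by nlinarith [sq_nonneg (x - 1/2)]
    have h3 : (x*(1-x))^p ≤ (1/4:ℝ)^p := pow_le_pow_left₀ h1 h2 p
    rw [abs_of_nonneg (by positivity), gammaMaj_eq]
    have hC : (0:ℝ) ≤ ((2*p+1:ℕ):ℝ) * ((2*p).choose p : ℝ) := by positivity
    have : ((2*p+1:ℕ):ℝ) * ((2*p).choose p : ℝ) * (x*(1-x))^p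
        ≤ ((2*p+1:ℕ):ℝ) * ((2*p).choose p : ℝ) * (1/4:ℝ)^p :=
      mul_le_mul_of_nonneg_left h3 hC
    calc ((2*p+1:ℕ):ℝ) * ((2*p).choose p : ℝ) * (x*(1-x))^p
        ≤ ((2*p+1:ℕ):ℝ) * ((2*p).choose p : ℝ) * (1/4:ℝ)^p := this
      _ = ((2*p+1:ℕ):ℝ) * ((2*p).choose p : ℝ) / 4^p := by
          rw [div_pow, one_pow, mul_one_div]
  have h := Convex.norm_image_sub_le_of_norm_deriv_le hdiff hbound (convex_Icc 0 1) hv hu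
  simpa [Real.norm_eq_abs, abs_sub_comm] using h

lemma majH_mem (p : ℕ) {x : ℝ} (hx : x ∈ Set.Icc (-(1/2):ℝ) (1/2)) :
    majH (2*p+1) x ∈ Set.Icc (-(1/2):ℝ) (1/2) := by
  have h : (1/2 + x) ∈ Set.Icc (0:ℝ) 1 := ⟨by linarith [hx.1], by linarith [hx.2]⟩
  have := majPoly_mem (2*p+1) h
  exact ⟨by simp [majH]; linarith [this.1], by simp [majH]; linarith [this.2]⟩

lemma majH_lip (p : ℕ) {x y : ℝ} (hx : x ∈ Set.Icc (-(1/2):ℝ) (1/2))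
    (hy : y ∈ Set.Icc (-(1/2):ℝ) (1/2)) :
    |majH (2*p+1) x - majH (2*p+1) y| ≤ gammaMaj (2*p+1) * |x - y| := by
  have hx' : (1/2 + x) ∈ Set.Icc (0:ℝ) 1 := ⟨by linarith [hx.1], by linarith [hx.2]⟩
  have hy' : (1/2 + y) ∈ Set.Icc (0:ℝ) 1 := ⟨by linarith [hy.1], by linarith [hy.2]⟩
  have h := majPoly_lip p hx' hy'
  have e : (1/2 + x) - (1/2 + y) = x - y := by ring
  rw [e] at h
  simpa [majH] using h

lemma majH_iter_bound (p : ℕ) (n : ℕ) :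
    ∀ x y : ℝ, x ∈ Set.Icc (-(1/2):ℝ) (1/2) → y ∈ Set.Icc (-(1/2):ℝ) (1/2) →
    (majH (2*p+1))^[n] x ∈ Set.Icc (-(1/2):ℝ) (1/2) ∧
    |(majH (2*p+1))^[n] x - (majH (2*p+1))^[n] y| ≤ gammaMaj (2*p+1)^n * |x - y| := by
  induction n with
  | zero => intro x y hx hy; simpa using hx
  | succ n ih =>
    intro x y hx hy
    obtain ⟨hmx, hxy⟩ := ih x y hx hy
    obtain ⟨hmy, -⟩ := ih y x hy hx
    rw [Function.iterate_succ_apply', Function.iterate_succ_apply']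
    refine ⟨majH_mem p hmx, ?_⟩
    calc |majH (2*p+1) ((majH (2*p+1))^[n] x) - majH (2*p+1) ((majH (2*p+1))^[n] y)|
        ≤ gammaMaj (2*p+1) * |(majH (2*p+1))^[n] x - (majH (2*p+1))^[n] y| :=
          majH_lip p hmx hmy
      _ ≤ gammaMaj (2*p+1) * (gammaMaj (2*p+1)^n * |x - y|) :=
          mul_le_mul_of_nonneg_left hxy (gammaMaj_nonneg _)
      _ = gammaMaj (2*p+1)^(n+1) * |x - y| := by ring

theorem majH_limit_lipschitz (m : ℕ) (hm : Odd m) (hm3 : 3 ≤ m) (L : ℝ → ℝ)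
    (hrange : ∀ α : ℝ, L α ∈ Set.Ioo (-(1/2) : ℝ) (1/2))
    (hL : ∀ α : ℝ, Filter.Tendsto (fun n : ℕ => (majH m)^[n] (α / gammaMaj m ^ n))
      Filter.atTop (nhds (L α))) :
    ∀ α α' : ℝ, |L α - L α'| ≤ |α - α'| := by
  obtain ⟨p, rfl⟩ := hm
  have hp1 : 1 ≤ p := by omega
  intro α α'
  have hγ : 1 < gammaMaj (2*p+1) := one_lt_gammaMaj p hp1
  have hγ0 : (0:ℝ) < gammaMaj (2*p+1) := lt_trans one_pos hγ
  have htend : Filter.Tendsto (fun n : ℕ =>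
      |(majH (2*p+1))^[n] (α / gammaMaj (2*p+1) ^ n)
        - (majH (2*p+1))^[n] (α' / gammaMaj (2*p+1) ^ n)|)
      Filter.atTop (nhds |L α - L α'|) := ((hL α).sub (hL α')).abs
  refine le_of_tendsto htend ?_
  have hpow : Filter.Tendsto (fun n : ℕ => gammaMaj (2*p+1) ^ n) Filter.atTop Filter.atTop :=
    tendsto_pow_atTop_atTop_of_one_lt hγ
  have h1 : Filter.Tendsto (fun n : ℕ => α / gammaMaj (2*p+1) ^ n) Filter.atTop (nhds 0) :=
    tendsto_const_nhds.div_atTop hpow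
  have h2 : Filter.Tendsto (fun n : ℕ => α' / gammaMaj (2*p+1) ^ n) Filter.atTop (nhds 0) :=
    tendsto_const_nhds.div_atTop hpow
  have hmem : Set.Icc (-(1/2):ℝ) (1/2) ∈ nhds (0:ℝ) :=
    Icc_mem_nhds (by norm_num) (by norm_num)
  filter_upwards [h1 hmem, h2 hmem] with n hx hy
  have hb := (majH_iter_bound p n _ _ hx hy).2
  have heq : |α / gammaMaj (2*p+1) ^ n - α' / gammaMaj (2*p+1) ^ n|
      = |α - α'| / gammaMaj (2*p+1) ^ n := by
    rw [div_sub_div_same, abs_div, abs_of_pos (pow_pos hγ0 n)]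
  calc |(majH (2*p+1))^[n] (α / gammaMaj (2*p+1) ^ n)
        - (majH (2*p+1))^[n] (α' / gammaMaj (2*p+1) ^ n)|
      ≤ gammaMaj (2*p+1)^n * (|α - α'| / gammaMaj (2*p+1) ^ n) := by rw [← heq]; exact hb
    _ = |α - α'| := by field_simp
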